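/- Let $s \ge 0$ be an integer, let $F \in \mathbb{R}[x_1,\dots,x_s]$ be a multilinear polynomial with nonnegative coefficients and zero constant coefficient, let $p \in [0,1]$, and let $\beta_1,\dots,\beta_s$ be i.i.d. Bernoulli($p$) random variables. Then for any real $t \ge 0$ and any real $\ell > 3^s t$, $\Pr[|F(\beta_1,\dots,\beta_s) - \ell| \le t] \le \max_{n \in \mathbb{N}} \Pr[X_{n,p} = 1]$, where $X_{n,p}$ denotes a Binomial($n$, $p$) random variable. -/

import Mathlib

open Finset
open scoped Classical


private lemma term_le_one {p : ℝ} (hp0 : 0 ≤ p) (hp1 : p ≤ 1) (n : ℕ) :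
    (n : ℝ) * p * (1 - p) ^ (n - 1) ≤ 1 := by
  have hq0 : (0:ℝ) ≤ 1 - p := by linarith
  cases n with
  | zero => simp
  | succ m =>
    have h := add_pow p (1 - p) (m + 1)
    have h1 : p + (1 - p) = 1 := by ring
    rw [h1, one_pow] at h
    have hmem : 1 ∈ Finset.range (m + 1 + 1) := by
      simp [Nat.lt_succ_iff]
    have hterm : ∀ k ∈ Finset.range (m + 1 + 1),
        (0:ℝ) ≤ p ^ k * (1 - p) ^ (m + 1 - k) * ((m+1).choose k : ℝ) := by
      intro k _
      positivity
    calc ((m+1 : ℕ) : ℝ) * p * (1 - p) ^ (m + 1 - 1)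
        = p ^ 1 * (1 - p) ^ (m + 1 - 1) * ((m+1).choose 1 : ℝ) := by
          simp [Nat.choose_one_right]; ring
      _ ≤ ∑ k ∈ Finset.range (m + 1 + 1), p ^ k * (1 - p) ^ (m + 1 - k) * ((m+1).choose k : ℝ) :=
          Finset.single_le_sum hterm hmem
      _ = 1 := h.symm

private lemma bddM {p : ℝ} (hp0 : 0 ≤ p) (hp1 : p ≤ 1) :
    BddAbove (Set.range fun n : ℕ => (n : ℝ) * p * (1 - p) ^ (n - 1)) := by
  refine ⟨1, ?_⟩
  rintro x ⟨n, rfl⟩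
  exact term_le_one hp0 hp1 n

private lemma le_M {p : ℝ} (hp0 : 0 ≤ p) (hp1 : p ≤ 1) (n : ℕ) :
    (n : ℝ) * p * (1 - p) ^ (n - 1) ≤ ⨆ m : ℕ, (m : ℝ) * p * (1 - p) ^ (m - 1) :=
  le_ciSup (bddM hp0 hp1) n

private lemma M_nonneg {p : ℝ} (hp0 : 0 ≤ p) (hp1 : p ≤ 1) :
    0 ≤ ⨆ m : ℕ, (m : ℝ) * p * (1 - p) ^ (m - 1) := by
  have := le_M hp0 hp1 0
  simpa using this


private lemma key {ι : Type} [DecidableEq ι] {p t : ℝ} (hp0 : 0 ≤ p) (hp1 : p ≤ 1) (ht : 0 ≤ t)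
    (hM : ∀ n : ℕ, (n : ℝ) * p * (1 - p) ^ (n - 1) ≤ ⨆ m : ℕ, (m : ℝ) * p * (1 - p) ^ (m - 1)) :
    ∀ n : ℕ, ∀ u : Finset ι, u.card = n → ∀ c : Finset ι → ℝ, (∀ S, 0 ≤ c S) → c ∅ = 0 →
      ∀ ℓ : ℝ, 3 ^ u.card * t < ℓ →
      ∑ A ∈ u.powerset, p ^ A.card * (1 - p) ^ (u.card - A.card) *
          (if |(∑ S ∈ A.powerset, c S) - ℓ| ≤ t then (1:ℝ) else 0)
        ≤ ⨆ m : ℕ, (m : ℝ) * p * (1 - p) ^ (m - 1) := by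
  intro n
  induction n using Nat.strong_induction_on with
  | _ n IH =>
  intro u hu c hc h0 ℓ hℓ
  have hq0 : (0:ℝ) ≤ 1 - p := by linarith
  have h3 : (1:ℝ) ≤ 3 ^ u.card := one_le_pow₀ (by norm_num)
  have htℓ : t < ℓ := lt_of_le_of_lt (by nlinarith) hℓ
  by_cases hbig : ∀ i ∈ u, (ℓ + t) / 2 < c {i}
  · -- Case A : all singleton coefficients are large
    have hpoint : ∀ A ∈ u.powerset,
        p ^ A.card * (1 - p) ^ (u.card - A.card) *
          (if |(∑ S ∈ A.powerset, c S) - ℓ| ≤ t then (1:ℝ) else 0)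
        ≤ p ^ A.card * (1 - p) ^ (u.card - A.card) * (if A.card = 1 then (1:ℝ) else 0) := by
      intro A hA
      by_cases hE : |(∑ S ∈ A.powerset, c S) - ℓ| ≤ t
      · have habs := abs_le.mp hE
        have hcard : A.card = 1 := by
          rcases Nat.lt_trichotomy A.card 1 with h | h | h
          · exfalso
            have hA0 : A = ∅ := card_eq_zero.mp (Nat.lt_one_iff.mp h)
            subst hA0
            rw [powerset_empty, sum_singleton, h0] at habs
            linarith [habs.2]
          · exact h
          · exfalso
            obtain ⟨j, hj, k, hk, hjk⟩ := Finset.one_lt_card.mp h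
            have hne : ({j} : Finset ι) ≠ {k} := by
              simpa using hjk
            have hsub : ({{j}, {k}} : Finset (Finset ι)) ⊆ A.powerset := by
              intro S hS
              simp only [mem_insert, mem_singleton] at hS
              rcases hS with rfl | rfl <;>
                simp [mem_powerset, singleton_subset_iff, hj, hk]
            have hsum : c {j} + c {k} ≤ ∑ S ∈ A.powerset, c S := by
              have h2 := Finset.sum_le_sum_of_subset_of_nonneg hsub
                (fun S _ _ => hc S)
              rwa [Finset.sum_insert (by simpa using hne), sum_singleton] at h2
            have h1 := hbig j (mem_powerset.mp hA hj)
            have h2 := hbig k (mem_powerset.mp hA hk)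
            linarith [habs.1]
        simp [hE, hcard]
      · simp only [hE, if_false, mul_zero]
        positivity
    have hcount : ∑ A ∈ u.powerset, p ^ A.card * (1 - p) ^ (u.card - A.card) *
          (if A.card = 1 then (1:ℝ) else 0)
        = (u.card : ℝ) * p * (1 - p) ^ (u.card - 1) := by
      simp_rw [mul_ite, mul_one, mul_zero, ← Finset.sum_filter, ← powersetCard_eq_filter]
      have hcg : ∀ A ∈ u.powersetCard 1,
          p ^ A.card * (1 - p) ^ (u.card - A.card) = p * (1 - p) ^ (u.card - 1) := by
        intro A hA
        rw [(mem_powersetCard.mp hA).2, pow_one]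
      rw [Finset.sum_congr rfl hcg, Finset.sum_const, card_powersetCard,
        Nat.choose_one_right, nsmul_eq_mul]
      ring
    calc ∑ A ∈ u.powerset, p ^ A.card * (1 - p) ^ (u.card - A.card) *
          (if |(∑ S ∈ A.powerset, c S) - ℓ| ≤ t then (1:ℝ) else 0)
        ≤ ∑ A ∈ u.powerset, p ^ A.card * (1 - p) ^ (u.card - A.card) *
          (if A.card = 1 then (1:ℝ) else 0) := Finset.sum_le_sum hpoint
      _ = (u.card : ℝ) * p * (1 - p) ^ (u.card - 1) := hcount
      _ ≤ _ := hM u.card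
  · -- Case B : some singleton coefficient is small
    push_neg at hbig
    obtain ⟨i, hi, hsmall⟩ := hbig
    set u' := u.erase i with hu'
    have hiu' : i ∉ u' := notMem_erase i u
    have hins : insert i u' = u := insert_erase hi
    have hn1 : 1 ≤ n := by
      rw [← hu]; exact card_pos.mpr ⟨i, hi⟩
    have hcard' : u'.card + 1 = n := by
      rw [hu', card_erase_of_mem hi, hu]; omega
    set M := ⨆ m : ℕ, (m : ℝ) * p * (1 - p) ^ (m - 1) with hMdef
    set d' : Finset ι → ℝ := fun T => if T = ∅ then 0 else c T + c (insert i T) with hd'def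
    have hd'nn : ∀ S, 0 ≤ d' S := by
      intro S
      simp only [hd'def]
      split
      · exact le_refl 0
      · exact add_nonneg (hc S) (hc (insert i S))
    have hG : ∀ B ∈ u'.powerset,
        ∑ S ∈ (insert i B).powerset, c S = c {i} + ∑ T ∈ B.powerset, d' T := by
      intro B hB
      have hiB : i ∉ B := fun h => hiu' (mem_powerset.mp hB h)
      rw [Finset.sum_powerset_insert hiB, ← Finset.sum_add_distrib]
      have hemp : (∅ : Finset ι) ∈ B.powerset := mem_powerset.mpr (empty_subset B)
      rw [← Finset.add_sum_erase _ _ hemp, ← Finset.add_sum_erase _ d' hemp]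
      have hcongr : ∀ T ∈ B.powerset.erase ∅, c T + c (insert i T) = d' T := by
        intro T hT
        simp only [hd'def]
        rw [if_neg (mem_erase.mp hT).1]
      rw [Finset.sum_congr rfl hcongr]
      simp only [hd'def, if_pos rfl, h0, Finset.insert_empty]
      ring
    rw [hu] at hℓ
    rw [hu, ← hins, Finset.sum_powerset_insert hiu']
    have hb1 : ∑ B ∈ u'.powerset, p ^ B.card * (1 - p) ^ (n - B.card) *
          (if |(∑ S ∈ B.powerset, c S) - ℓ| ≤ t then (1:ℝ) else 0) ≤ (1 - p) * M := by
      have heq : ∀ B ∈ u'.powerset, p ^ B.card * (1 - p) ^ (n - B.card) *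
            (if |(∑ S ∈ B.powerset, c S) - ℓ| ≤ t then (1:ℝ) else 0)
          = (1 - p) * (p ^ B.card * (1 - p) ^ (u'.card - B.card) *
            (if |(∑ S ∈ B.powerset, c S) - ℓ| ≤ t then (1:ℝ) else 0)) := by
        intro B hB
        have hle := card_le_card (mem_powerset.mp hB)
        have hnB : n - B.card = (u'.card - B.card) + 1 := by omega
        rw [hnB, pow_succ]
        ring
      rw [Finset.sum_congr rfl heq, ← Finset.mul_sum]
      refine mul_le_mul_of_nonneg_left ?_ hq0
      refine IH u'.card (by omega) u' rfl c hc h0 ℓ ?_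
      have h3le : (3:ℝ) ^ u'.card ≤ 3 ^ n := by
        apply pow_le_pow_right₀ (by norm_num) (by omega)
      exact lt_of_le_of_lt (mul_le_mul_of_nonneg_right h3le ht) hℓ
    have hb2 : ∑ B ∈ u'.powerset, p ^ (insert i B).card * (1 - p) ^ (n - (insert i B).card) *
          (if |(∑ S ∈ (insert i B).powerset, c S) - ℓ| ≤ t then (1:ℝ) else 0) ≤ p * M := by
      have heq : ∀ B ∈ u'.powerset, p ^ (insert i B).card * (1 - p) ^ (n - (insert i B).card) *
            (if |(∑ S ∈ (insert i B).powerset, c S) - ℓ| ≤ t then (1:ℝ) else 0)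
          = p * (p ^ B.card * (1 - p) ^ (u'.card - B.card) *
            (if |(∑ T ∈ B.powerset, d' T) - (ℓ - c {i})| ≤ t then (1:ℝ) else 0)) := by
        intro B hB
        have hiB : i ∉ B := fun h => hiu' (mem_powerset.mp hB h)
        have hle := card_le_card (mem_powerset.mp hB)
        rw [card_insert_of_notMem hiB]
        have h1 : n - (B.card + 1) = u'.card - B.card := by omega
        have h2 : (∑ S ∈ (insert i B).powerset, c S) - ℓ
            = (∑ T ∈ B.powerset, d' T) - (ℓ - c {i}) := by
          rw [hG B hB]; ring
        rw [h1, h2, pow_succ]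
        ring
      rw [Finset.sum_congr rfl heq, ← Finset.mul_sum]
      refine mul_le_mul_of_nonneg_left ?_ hp0
      refine IH u'.card (by omega) u' rfl d' hd'nn (if_pos rfl) (ℓ - c {i}) ?_
      have ha : (1:ℝ) ≤ 3 ^ u'.card := one_le_pow₀ (by norm_num)
      have h3n : (3:ℝ) ^ n * t = 3 * (3 ^ u'.card * t) := by
        rw [← hcard', pow_succ]; ring
      have hℓ' : 3 * (3 ^ u'.card * t) < ℓ := by rw [← h3n]; exact hℓ
      have hXt : t ≤ 3 ^ u'.card * t := le_mul_of_one_le_left ht ha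
      linarith
    calc _ ≤ (1 - p) * M + p * M := add_le_add hb1 hb2
      _ = M := by ring

theorem stmt_2 (s : ℕ) (c : Finset (Fin s) → ℝ) (hc : ∀ S, 0 ≤ c S) (h0 : c ∅ = 0)
    (p : ℝ) (hp0 : 0 ≤ p) (hp1 : p ≤ 1) (t ℓ : ℝ) (ht : 0 ≤ t) (hℓ : 3 ^ s * t < ℓ) :
    ∑ x : Fin s → Bool,
      (∏ i, if x i then p else 1 - p) *
        (if |(∑ S : Finset (Fin s), c S * ∏ i ∈ S, (if x i then (1 : ℝ) else 0)) - ℓ| ≤ t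
          then (1 : ℝ) else 0)
      ≤ ⨆ n : ℕ, (n : ℝ) * p * (1 - p) ^ (n - 1) := by
  have hcu : (Finset.univ : Finset (Fin s)).card = s := by simp
  have hkey := key hp0 hp1 ht (le_M hp0 hp1) s Finset.univ hcu c hc h0 ℓ
    (by rw [hcu]; exact hℓ)
  refine le_trans (le_of_eq ?_) hkey
  refine Finset.sum_nbij' (fun x => Finset.univ.filter (fun j => x j = true))
    (fun A => fun k => if k ∈ A then true else false)
    (fun x _ => mem_powerset.mpr (subset_univ _)) (fun A _ => mem_univ _)
    (fun x _ => by funext k; simp) (fun A _ => by ext k; simp) ?_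
  intro x _
  set A := Finset.univ.filter (fun j => x j = true) with hA
  have hmem : ∀ k, k ∈ A ↔ x k = true := by intro k; simp [hA]
  have hw : (∏ i, if x i then p else 1 - p) = p ^ A.card * (1 - p) ^ ((Finset.univ : Finset (Fin s)).card - A.card) := by
    rw [← Finset.prod_filter_mul_prod_filter_not Finset.univ (fun j => x j = true)]
    have h1 : ∀ i ∈ Finset.univ.filter (fun j => x j = true),
        (if x i then p else 1 - p) = p := by
      intro i hi; rw [if_pos]; exact (mem_filter.mp hi).2
    have h2 : ∀ i ∈ Finset.univ.filter (fun j => ¬ x j = true),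
        (if x i then p else 1 - p) = 1 - p := by
      intro i hi
      rw [if_neg]; exact (mem_filter.mp hi).2
    rw [Finset.prod_congr rfl h1, Finset.prod_congr rfl h2, Finset.prod_const,
      Finset.prod_const]
    have h3 := Finset.card_filter_add_card_filter_not (s := (Finset.univ : Finset (Fin s)))
      (fun j => x j = true)
    have h4 : #(Finset.univ.filter (fun j => ¬ x j = true)) = (Finset.univ : Finset (Fin s)).card - A.card := by
      rw [hA] at *
      omega
    rw [h4]
  have hF : (∑ S : Finset (Fin s), c S * ∏ i ∈ S, (if x i then (1 : ℝ) else 0))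
      = ∑ S ∈ A.powerset, c S := by
    have hprod : ∀ S : Finset (Fin s),
        (∏ i ∈ S, (if x i then (1 : ℝ) else 0)) = if S ⊆ A then 1 else 0 := by
      intro S
      split
      · next h =>
        apply Finset.prod_eq_one
        intro i hi
        rw [if_pos ((hmem i).mp (h hi))]
      · next h =>
        obtain ⟨i, hiS, hiA⟩ := Finset.not_subset.mp h
        apply Finset.prod_eq_zero hiS
        rw [if_neg]
        exact fun hx => hiA ((hmem i).mpr hx)
    simp_rw [hprod, mul_ite, mul_one, mul_zero, ← Finset.sum_filter]
    congr 1
    ext S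
    simp [mem_powerset]
  rw [hw, hF]
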